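/- Let γ : ℝ → ℂ be a C² immersed loop and p ∈ ℂ with γ(t) ≠ p for all t. Define the tangency function g(t) := Im(conj(deriv γ t) · (γ(t) − p)), so g(t) = 0 exactly when the tangent line to γ at γ(t) passes through p. Suppose the set Z = {t ∈ [0,1) : g(t) = 0} is finite and deriv g t ≠ 0 for every t ∈ Z. For t ∈ Z define the sign of the corresponding tangent line by ε(t) := − sign(Re(conj(deriv γ t) · (γ(t) − p))) · sign(deriv g t). Then ∑_{t ∈ Z} ε(t) = 2·ind(γ) − 2·ind_p(γ). -/

import Mathlib

open Filter Set
open scoped Topology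

/-- sign of positive multiple -/
lemma sign_pos_mul {a : ℝ} (ha : 0 < a) (x : ℝ) : Real.sign (a * x) = Real.sign x := by
  rcases lt_trichotomy x 0 with h | h | h
  · rw [Real.sign_of_neg h, Real.sign_of_neg (mul_neg_of_pos_of_neg ha h)]
  · simp [h]
  · rw [Real.sign_of_pos h, Real.sign_of_pos (mul_pos ha h)]

/-- If a continuous function has no integer values on an interval, its floor is constant. -/
lemma floor_const {φ : ℝ → ℝ} (hφ : Continuous φ) {x y : ℝ} (hxy : x ≤ y)
    (hni : ∀ t ∈ Set.Icc x y, ∀ m : ℤ, φ t ≠ (m : ℝ)) : ⌊φ x⌋ = ⌊φ y⌋ := by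
  by_contra hne
  rcases lt_or_gt_of_ne hne with h | h
  · have h1 : φ x < ((⌊φ y⌋ : ℤ) : ℝ) := by
      have := Int.lt_floor_add_one (φ x)
      have h2 : (⌊φ x⌋ : ℝ) + 1 ≤ (⌊φ y⌋ : ℝ) := by exact_mod_cast Int.add_one_le_iff.mpr h
      linarith
    have h2 : ((⌊φ y⌋ : ℤ) : ℝ) ≤ φ y := Int.floor_le _
    obtain ⟨t, ht, hts⟩ := intermediate_value_Icc hxy (hφ.continuousOn)
      (Set.mem_Icc.mpr ⟨le_of_lt h1, h2⟩)
    exact hni t ht _ hts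
  · have h1 : φ y < ((⌊φ x⌋ : ℤ) : ℝ) := by
      have := Int.lt_floor_add_one (φ y)
      have h2 : (⌊φ y⌋ : ℝ) + 1 ≤ (⌊φ x⌋ : ℝ) := by exact_mod_cast Int.add_one_le_iff.mpr h
      linarith
    have h2 : ((⌊φ x⌋ : ℤ) : ℝ) ≤ φ x := Int.floor_le _
    obtain ⟨t, ht, hts⟩ := intermediate_value_Icc' hxy (hφ.continuousOn)
      (Set.mem_Icc.mpr ⟨le_of_lt h1, h2⟩)
    exact hni t ht _ hts

lemma slope_sign {φ : ℝ → ℝ} {t d : ℝ} (h : HasDerivAt φ d t) :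
    ∀ᶠ s in 𝓝[≠] t, ((0 < d → 0 < slope φ t s) ∧ (d < 0 → slope φ t s < 0)) := by
  have hs := hasDerivAt_iff_tendsto_slope.mp h
  have : {x : ℝ | (0 < d → 0 < x) ∧ (d < 0 → x < 0)} ∈ 𝓝 d := by
    rcases lt_trichotomy d 0 with hd | hd | hd
    · filter_upwards [Iio_mem_nhds hd] with x hx
      exact ⟨fun h' => absurd hd (not_lt.mpr h'.le), fun _ => hx⟩
    · subst hd
      filter_upwards [univ_mem] with x _
      exact ⟨fun h' => absurd h' (lt_irrefl 0), fun h' => absurd h' (lt_irrefl 0)⟩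
    · filter_upwards [Ioi_mem_nhds hd] with x hx
      exact ⟨fun _ => hx, fun h' => absurd hd (not_lt.mpr h'.le)⟩
  exact hs this

/-- find a point just left of `t` -/
lemma exists_near_left {φ : ℝ → ℝ} {t d : ℝ} (h : HasDerivAt φ d t) {c₀ : ℝ} (hc₀ : c₀ < t) :
    ∃ c, c₀ < c ∧ c < t ∧ |φ c - φ t| < 1 ∧ (0 < d → φ c < φ t) ∧ (d < 0 → φ t < φ c) := by
  have hmono : 𝓝[<] t ≤ 𝓝[≠] t := nhdsWithin_mono t (fun s hs => ne_of_lt hs)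
  have h1 : ∀ᶠ s in 𝓝[<] t, ((0 < d → 0 < slope φ t s) ∧ (d < 0 → slope φ t s < 0)) :=
    hmono (slope_sign h)
  have h2 : ∀ᶠ s in 𝓝[<] t, |φ s - φ t| < 1 := by
    have h3 : ∀ᶠ s in 𝓝 t, dist (φ s) (φ t) < 1 :=
      Metric.tendsto_nhds.mp h.continuousAt.tendsto 1 one_pos
    refine nhdsWithin_le_nhds (h3.mono fun s hs => ?_)
    rwa [Real.dist_eq] at hs
  have h3 : ∀ᶠ s in 𝓝[<] t, c₀ < s := nhdsWithin_le_nhds (Ioi_mem_nhds hc₀)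
  have h4 : ∀ᶠ s in 𝓝[<] t, s < t := eventually_mem_nhdsWithin
  obtain ⟨c, hc1, hc2, hc5, hc6⟩ := (h1.and (h2.and (h3.and h4))).exists
  refine ⟨c, hc5, hc6, hc2, ?_, ?_⟩
  · intro hd
    have := hc1.1 hd
    rw [slope_def_field] at this
    have hden : c - t < 0 := by linarith
    rcases div_pos_iff.mp this with ⟨h5, h6⟩ | ⟨h5, h6⟩
    · linarith
    · linarith
  · intro hd
    have := hc1.2 hd
    rw [slope_def_field] at this
    have hden : c - t < 0 := by linarith
    rcases div_neg_iff.mp this with ⟨h5, h6⟩ | ⟨h5, h6⟩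
    · linarith
    · linarith

lemma exists_near_right {φ : ℝ → ℝ} {t d : ℝ} (h : HasDerivAt φ d t) {u₀ : ℝ} (hu₀ : t < u₀) :
    ∃ u, t < u ∧ u < u₀ ∧ |φ u - φ t| < 1 ∧ (0 < d → φ t < φ u) ∧ (d < 0 → φ u < φ t) := by
  have hmono : 𝓝[>] t ≤ 𝓝[≠] t := nhdsWithin_mono t (fun s hs => ne_of_gt hs)
  have h1 : ∀ᶠ s in 𝓝[>] t, ((0 < d → 0 < slope φ t s) ∧ (d < 0 → slope φ t s < 0)) :=
    hmono (slope_sign h)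
  have h2 : ∀ᶠ s in 𝓝[>] t, |φ s - φ t| < 1 := by
    have h3 : ∀ᶠ s in 𝓝 t, dist (φ s) (φ t) < 1 :=
      Metric.tendsto_nhds.mp h.continuousAt.tendsto 1 one_pos
    refine nhdsWithin_le_nhds (h3.mono fun s hs => ?_)
    rwa [Real.dist_eq] at hs
  have h3 : ∀ᶠ s in 𝓝[>] t, s < u₀ := nhdsWithin_le_nhds (Iio_mem_nhds hu₀)
  have h4 : ∀ᶠ s in 𝓝[>] t, t < s := eventually_mem_nhdsWithin
  obtain ⟨u, hu1, hu2, hu5, hu6⟩ := (h1.and (h2.and (h3.and h4))).exists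
  refine ⟨u, hu6, hu5, hu2, ?_, ?_⟩
  · intro hd
    have := hu1.1 hd
    rw [slope_def_field] at this
    have hden : 0 < u - t := by linarith
    rcases div_pos_iff.mp this with ⟨h5, h6⟩ | ⟨h5, h6⟩
    · linarith
    · linarith
  · intro hd
    have := hu1.2 hd
    rw [slope_def_field] at this
    have hden : 0 < u - t := by linarith
    rcases div_neg_iff.mp this with ⟨h5, h6⟩ | ⟨h5, h6⟩
    · linarith
    · linarith

lemma crossing_count (φ : ℝ → ℝ) (hφ : Continuous φ) :
    ∀ (S : Finset ℝ), ∀ (a b : ℝ), a ≤ b →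
    (∀ t ∈ S, t ∈ Set.Ioo a b) →
    (∀ t ∈ Set.Ioo a b, (∃ m : ℤ, φ t = (m : ℝ)) → t ∈ S) →
    (∀ t ∈ S, ∃ m : ℤ, φ t = (m : ℝ)) →
    (∀ t ∈ S, HasDerivAt φ (deriv φ t) t ∧ deriv φ t ≠ 0) →
    (∀ m : ℤ, φ a ≠ (m : ℝ)) → (∀ m : ℤ, φ b ≠ (m : ℝ)) →
    ∑ t ∈ S, Real.sign (deriv φ t) = ((⌊φ b⌋ : ℝ) - (⌊φ a⌋ : ℝ)) := by
  intro S
  induction S using Finset.strongInduction with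
  | _ S ih =>
  intro a b hab hmem hall hint hcross ha hb
  rcases S.eq_empty_or_nonempty with rfl | hS
  · have hfl : ⌊φ a⌋ = ⌊φ b⌋ := by
      apply floor_const hφ hab
      intro t ht k hk
      rcases eq_or_lt_of_le ht.1 with rfl | h1
      · exact ha k hk
      rcases eq_or_lt_of_le ht.2 with rfl | h2
      · exact hb k hk
      exact absurd (hall t ⟨h1, h2⟩ ⟨k, hk⟩) (Finset.notMem_empty t)
    simp [hfl]
  · set t0 := S.max' hS with ht0def
    have ht0S : t0 ∈ S := S.max'_mem hS
    obtain ⟨m, hm⟩ := hint t0 ht0S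
    obtain ⟨hD, hdne⟩ := hcross t0 ht0S
    have hab0 := hmem t0 ht0S
    set S' := S.erase t0 with hS'def
    set c₀ := Finset.max' (insert a S') (Finset.insert_nonempty a S') with hc₀def
    have hc₀lt : c₀ < t0 := by
      apply (Finset.max'_lt_iff _ _).mpr
      intro y hy
      rcases Finset.mem_insert.mp hy with rfl | hy'
      · exact hab0.1
      · exact lt_of_le_of_ne (S.le_max' y (Finset.mem_of_mem_erase hy'))
          (Finset.ne_of_mem_erase hy')
    have hac₀ : a ≤ c₀ := Finset.le_max' _ a (Finset.mem_insert_self a S')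
    obtain ⟨c, hc₀c, hct0, hc1, hcpos, hcneg⟩ := exists_near_left hD hc₀lt
    obtain ⟨u, ht0u, hub, hu1, hupos, huneg⟩ := exists_near_right hD hab0.2
    have hac : a < c := lt_of_le_of_lt hac₀ hc₀c
    have hcb : c < b := hct0.trans hab0.2
    -- floor is constant on [u, b]
    have hub_floor : ⌊φ u⌋ = ⌊φ b⌋ := by
      apply floor_const hφ (le_of_lt hub)
      intro t ht k hk
      rcases eq_or_lt_of_le ht.2 with rfl | h2
      · exact hb k hk
      have htIoo : t ∈ Set.Ioo a b := ⟨lt_trans hab0.1 (lt_of_lt_of_le ht0u ht.1), h2⟩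
      have htS := hall t htIoo ⟨k, hk⟩
      have := S.le_max' t htS
      linarith [ht.1]
    -- sum splits
    have hsum : ∑ t ∈ S, Real.sign (deriv φ t)
        = (∑ t ∈ S', Real.sign (deriv φ t)) + Real.sign (deriv φ t0) :=
      (Finset.sum_erase_add S _ ht0S).symm
    -- apply IH on (a, c)
    have hih : ∑ t ∈ S', Real.sign (deriv φ t) = ((⌊φ c⌋ : ℝ) - (⌊φ a⌋ : ℝ)) := by
      apply ih S' (Finset.erase_ssubset ht0S) a c (le_of_lt hac)
      · intro t ht
        refine ⟨(hmem t (Finset.mem_of_mem_erase ht)).1, ?_⟩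
        have : t ≤ c₀ := Finset.le_max' _ t (Finset.mem_insert_of_mem ht)
        linarith
      · intro t ht hex
        refine Finset.mem_erase.mpr ⟨?_, hall t ⟨ht.1, lt_trans ht.2 hcb⟩ hex⟩
        intro heq
        rw [heq] at ht
        linarith [ht.2, hct0]
      · exact fun t ht => hint t (Finset.mem_of_mem_erase ht)
      · exact fun t ht => hcross t (Finset.mem_of_mem_erase ht)
      · exact ha
      · -- φ c is not an integer
        intro k hk
        rcases lt_or_gt_of_ne hdne with hd | hd
        · -- d < 0 : m < φ c < m + 1
          have h1 : φ t0 < φ c := hcneg hd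
          have h2 : |φ c - φ t0| < 1 := hc1
          rw [hm] at h1 h2
          rw [hk] at h1 h2
          rw [abs_lt] at h2
          have : (m : ℝ) < k ∧ (k : ℝ) < m + 1 := ⟨h1, by linarith⟩
          have hmk : m < k := by exact_mod_cast this.1
          have hkm : k < m + 1 := by exact_mod_cast this.2
          omega
        · -- 0 < d : m - 1 < φ c < m
          have h1 : φ c < φ t0 := hcpos hd
          have h2 : |φ c - φ t0| < 1 := hc1
          rw [hm] at h1 h2
          rw [hk] at h1 h2
          rw [abs_lt] at h2
          have : (m : ℝ) - 1 < k ∧ (k : ℝ) < m := ⟨by linarith, h1⟩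
          have hmk : m - 1 < k := by exact_mod_cast this.1
          have hkm : k < m := by exact_mod_cast this.2
          omega
    rcases lt_or_gt_of_ne hdne with hd | hd
    · -- decreasing crossing: ⌊φ c⌋ = m, ⌊φ u⌋ = m - 1
      have hfc : ⌊φ c⌋ = m := by
        rw [Int.floor_eq_iff]
        have h1 : φ t0 < φ c := hcneg hd
        have h2 := abs_lt.mp hc1
        rw [hm] at h1 h2
        refine ⟨by push_cast; linarith, by push_cast; linarith⟩
      have hfu : ⌊φ u⌋ = m - 1 := by
        rw [Int.floor_eq_iff]
        have h1 : φ u < φ t0 := huneg hd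
        have h2 := abs_lt.mp hu1
        rw [hm] at h1 h2
        refine ⟨by push_cast; linarith, by push_cast; linarith⟩
      rw [hsum, hih, Real.sign_of_neg hd, ← hub_floor, hfc, hfu]
      push_cast
      ring
    · -- increasing crossing: ⌊φ c⌋ = m - 1, ⌊φ u⌋ = m
      have hfc : ⌊φ c⌋ = m - 1 := by
        rw [Int.floor_eq_iff]
        have h1 : φ c < φ t0 := hcpos hd
        have h2 := abs_lt.mp hc1
        rw [hm] at h1 h2
        refine ⟨by push_cast; linarith, by push_cast; linarith⟩
      have hfu : ⌊φ u⌋ = m := by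
        rw [Int.floor_eq_iff]
        have h1 : φ t0 < φ u := hupos hd
        have h2 := abs_lt.mp hu1
        rw [hm] at h1 h2
        refine ⟨by push_cast; linarith, by push_cast; linarith⟩
      rw [hsum, hih, Real.sign_of_pos hd, ← hub_floor, hfc, hfu]
      push_cast
      ring

open Complex in
lemma periodic_deriv_aux (f : ℝ → ℂ) (hf : ∀ t, f (t + 1) = f t) (t : ℝ) :
    deriv f (t + 1) = deriv f t := by
  have hfun : (fun s => f (s + 1)) = f := funext hf
  rw [← deriv_comp_add_const f 1 t, hfun]

open scoped BigOperators

/-- The toy model (degree 1) formula: the algebraic number of lines through `p`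
tangent to the oriented immersed curve `γ` equals `2·ind(γ) − 2·ind_p(γ)`. -/
theorem lines_through_point_tangent_count (γ : ℝ → ℂ) (hγ : ContDiff ℝ 2 γ)
    (hper : ∀ t, γ (t + 1) = γ t) (himm : ∀ t, deriv γ t ≠ 0)
    (p : ℂ) (hp : ∀ t, γ t ≠ p)
    (g : ℝ → ℝ) (hg : g = fun t => (star (deriv γ t) * (γ t - p)).im)
    (hZ : {t ∈ Set.Ico (0:ℝ) 1 | g t = 0}.Finite)
    (hreg : ∀ t ∈ {t ∈ Set.Ico (0:ℝ) 1 | g t = 0}, deriv g t ≠ 0) :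
    ((∑ t ∈ hZ.toFinset,
        -Real.sign ((star (deriv γ t) * (γ t - p)).re) * Real.sign (deriv g t) : ℝ) : ℂ)
      = 2 * ((1 / (2 * (Real.pi : ℂ) * Complex.I)) *
            ∫ t in (0:ℝ)..1, deriv (deriv γ) t / deriv γ t)
        - 2 * ((1 / (2 * (Real.pi : ℂ) * Complex.I)) *
            ∫ t in (0:ℝ)..1, deriv γ t / (γ t - p)) := by
  -- ## Smoothness facts
  have hdγ : Differentiable ℝ γ := hγ.differentiable (by norm_num)
  have hγ1 : ContDiff ℝ 1 (deriv γ) := by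
    have h2 : ContDiff ℝ ((1 : ℕ) + 1) γ := by exact_mod_cast hγ
    exact (contDiff_succ_iff_deriv.mp h2).2.2
  have hdγ' : Differentiable ℝ (deriv γ) := hγ1.differentiable one_ne_zero
  have hcγ' : Continuous (deriv γ) := hdγ'.continuous
  have hcγ'' : Continuous (deriv (deriv γ)) := by
    have h2 : ContDiff ℝ ((0 : ℕ) + 1) (deriv γ) := by exact_mod_cast hγ1
    exact ((contDiff_succ_iff_deriv.mp h2).2.2).continuous
  have hsub : ∀ t, γ t - p ≠ 0 := fun t => sub_ne_zero.mpr (hp t)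
  -- ## the logarithmic derivative
  set w : ℝ → ℂ := fun t => deriv γ t / (γ t - p) with hw_def
  set q : ℝ → ℂ := fun t =>
    deriv (deriv γ) t / deriv γ t - deriv γ t / (γ t - p) with hq_def
  have hw0 : ∀ t, w t ≠ 0 := fun t => div_ne_zero (himm t) (hsub t)
  have hqcont : Continuous q :=
    (hcγ''.div hcγ' himm).sub (hcγ'.div ((hdγ.continuous).sub continuous_const) hsub)
  have hwD : ∀ t, HasDerivAt w (q t * w t) t := by
    intro t
    have h1 : HasDerivAt (deriv γ) (deriv (deriv γ) t) t := (hdγ' t).hasDerivAt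
    have h2 : HasDerivAt (fun s => γ s - p) (deriv γ t) t := ((hdγ t).hasDerivAt).sub_const p
    have := h1.div h2 (hsub t)
    refine this.congr_deriv ?_
    simp only [hq_def, hw_def]
    field_simp [himm t, hsub t]
  -- periodicity
  have hpγ' : ∀ t, deriv γ (t + 1) = deriv γ t := periodic_deriv_aux γ hper
  have hpγ'' : ∀ t, deriv (deriv γ) (t + 1) = deriv (deriv γ) t :=
    periodic_deriv_aux (deriv γ) hpγ'
  have hqper : ∀ t, q (t + 1) = q t := by
    intro t
    show deriv (deriv γ) (t+1) / deriv γ (t+1) - deriv γ (t+1) / (γ (t+1) - p) = _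
    rw [hpγ' t, hpγ'' t, hper t]
  have hwper : ∀ t, w (t + 1) = w t := by
    intro t
    show deriv γ (t+1) / (γ (t+1) - p) = _
    rw [hpγ' t, hper t]
  -- ## primitive of q
  set F : ℝ → ℂ := fun t => ∫ s in (0:ℝ)..t, q s with hF_def
  have hqint : ∀ a b : ℝ, IntervalIntegrable q MeasureTheory.volume a b :=
    fun a b => hqcont.intervalIntegrable a b
  have hFD : ∀ t, HasDerivAt F (q t) t := by
    intro t
    exact intervalIntegral.integral_hasDerivAt_right (hqint 0 t)
      (hqcont.stronglyMeasurableAtFilter _ _) hqcont.continuousAt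
  have hF0 : F 0 = 0 := intervalIntegral.integral_same
  -- w t = w 0 * exp (F t)
  have hwF : ∀ t, w t = w 0 * Complex.exp (F t) := by
    have hGD : ∀ t, HasDerivAt (fun t => w t * Complex.exp (-F t)) 0 t := by
      intro t
      have := (hwD t).mul (((hFD t).neg).cexp)
      refine this.congr_deriv ?_
      ring
    have hconst : ∀ t, w t * Complex.exp (-F t) = w 0 * Complex.exp (-F 0) :=
      fun t => is_const_of_deriv_eq_zero
        (fun s => ((hGD s).differentiableAt : DifferentiableAt ℝ _ s))
        (fun s => (hGD s).deriv) t 0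
    intro t
    have h := hconst t
    rw [hF0, neg_zero, Complex.exp_zero, mul_one] at h
    have : w t * Complex.exp (-F t) * Complex.exp (F t) = w 0 * Complex.exp (F t) := by
      rw [h]
    rwa [mul_assoc, ← Complex.exp_add, neg_add_cancel, Complex.exp_zero, mul_one] at this
  -- F is periodic up to F 1
  have hFper : ∀ t, F (t + 1) = F t + F 1 := by
    intro t
    have hadd : F t + ∫ s in t..(t+1), q s = F (t + 1) :=
      intervalIntegral.integral_add_adjacent_intervals (hqint 0 t) (hqint t (t+1))
    have hper' : (∫ s in t..(t+1), q s) = ∫ s in (0:ℝ)..(0+1), q s :=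
      Function.Periodic.intervalIntegral_add_eq hqper t 0
    rw [← hadd, hper']
    norm_num
    rfl
  -- F 1 is 2πi times an integer
  have hexp1 : Complex.exp (F 1) = 1 := by
    have h1 : w 1 = w 0 := by have := hwper 0; simpa using this
    have h2 := hwF 1
    rw [h1] at h2
    have := mul_left_cancel₀ (hw0 0) (h2.symm.trans (mul_one (w 0)).symm)
    exact this
  obtain ⟨n, hn⟩ := Complex.exp_eq_one_iff.mp hexp1
  -- ## RHS equals 2n
  have hint1 : IntervalIntegrable (fun t => deriv (deriv γ) t / deriv γ t)
      MeasureTheory.volume 0 1 := (hcγ''.div hcγ' himm).intervalIntegrable 0 1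
  have hint2 : IntervalIntegrable (fun t => deriv γ t / (γ t - p))
      MeasureTheory.volume 0 1 :=
    (hcγ'.div ((hdγ.continuous).sub continuous_const) hsub).intervalIntegrable 0 1
  have hsplit : F 1 = (∫ t in (0:ℝ)..1, deriv (deriv γ) t / deriv γ t)
      - ∫ t in (0:ℝ)..1, deriv γ t / (γ t - p) := by
    rw [hF_def]
    exact intervalIntegral.integral_sub hint1 hint2
  have hRHS : (2 * ((1 / (2 * (Real.pi : ℂ) * Complex.I)) *
            ∫ t in (0:ℝ)..1, deriv (deriv γ) t / deriv γ t)
        - 2 * ((1 / (2 * (Real.pi : ℂ) * Complex.I)) *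
            ∫ t in (0:ℝ)..1, deriv γ t / (γ t - p))) = 2 * (n : ℂ) := by
    have h2pi : (2 * (Real.pi : ℂ) * Complex.I) ≠ 0 := by
      simp [Real.pi_ne_zero, Complex.I_ne_zero]
    have : 2 * ((1 / (2 * (Real.pi : ℂ) * Complex.I)) *
            ∫ t in (0:ℝ)..1, deriv (deriv γ) t / deriv γ t)
        - 2 * ((1 / (2 * (Real.pi : ℂ) * Complex.I)) *
            ∫ t in (0:ℝ)..1, deriv γ t / (γ t - p))
        = 2 * ((1 / (2 * (Real.pi : ℂ) * Complex.I)) * F 1) := by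
      rw [hsplit]; ring
    rw [this, hn]
    field_simp
  rw [hRHS]
  -- ## the angle function
  have hθD : ∀ t, HasDerivAt (fun t => (F t).im + (w 0).arg) ((q t).im) t := by
    intro t
    have h1 := (Complex.imCLM.hasFDerivAt).comp_hasDerivAt t (hFD t)
    exact (by simpa [Function.comp_def] using h1 : HasDerivAt (fun t => (F t).im) ((q t).im) t).add_const _
  set θ : ℝ → ℝ := fun t => (F t).im + (w 0).arg with hθ_def
  set ρ : ℝ → ℝ := fun t => ‖w 0‖ * Real.exp ((F t).re) with hρ_def
  have hρpos : ∀ t, 0 < ρ t := fun t =>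
    mul_pos (norm_pos_iff.mpr (hw0 0)) (Real.exp_pos _)
  have hρD : ∀ t, HasDerivAt ρ (ρ t * (q t).re) t := by
    intro t
    have h1 : HasDerivAt (fun t => (F t).re) ((q t).re) t := by
      have := (Complex.reCLM.hasFDerivAt).comp_hasDerivAt t (hFD t); simpa [Function.comp_def] using this
    have h2 := (h1.exp).const_mul ‖w 0‖
    refine h2.congr_deriv ?_
    simp only [hρ_def]
    ring
  have hwθ : ∀ t, w t = (ρ t : ℂ) * Complex.exp ((θ t : ℂ) * Complex.I) := by
    intro t
    rw [hwF t]
    conv_lhs => rw [← Complex.norm_mul_exp_arg_mul_I (w 0), ← Complex.re_add_im (F t)]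
    simp only [hρ_def, hθ_def, Complex.ofReal_mul, Complex.ofReal_exp, Complex.ofReal_add,
      add_mul, Complex.exp_add]
    ring
  have hre : ∀ t, (w t).re = ρ t * Real.cos (θ t) := by
    intro t
    rw [hwθ t, Complex.exp_mul_I]
    simp [← Complex.ofReal_cos, ← Complex.ofReal_sin, Complex.mul_re, Complex.mul_im,
      Complex.add_re, Complex.add_im]
  have him : ∀ t, (w t).im = ρ t * Real.sin (θ t) := by
    intro t
    rw [hwθ t, Complex.exp_mul_I]
    simp [← Complex.ofReal_cos, ← Complex.ofReal_sin, Complex.mul_re, Complex.mul_im,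
      Complex.add_re, Complex.add_im]
  -- ## relation with g
  set R : ℝ → ℝ := fun t => Complex.normSq (γ t - p) with hR_def
  have hRpos : ∀ t, 0 < R t := fun t => Complex.normSq_pos.mpr (hsub t)
  have hγ'w : ∀ t, deriv γ t = w t * (γ t - p) := fun t => (div_mul_cancel₀ _ (hsub t)).symm
  have hkey : ∀ t, star (deriv γ t) * (γ t - p) = (starRingEnd ℂ) (w t) * (R t : ℂ) := by
    intro t
    rw [hγ'w t]
    calc star (w t * (γ t - p)) * (γ t - p)
        = (starRingEnd ℂ) (w t) * ((starRingEnd ℂ) (γ t - p) * (γ t - p)) := by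
          rw [star_mul', mul_assoc]
          rfl
      _ = (starRingEnd ℂ) (w t) * ((R t : ℝ) : ℂ) := by
          rw [← Complex.normSq_eq_conj_mul_self]
  have hgim : ∀ t, g t = -(R t * (w t).im) := by
    intro t
    rw [hg]
    show (star (deriv γ t) * (γ t - p)).im = _
    rw [hkey t]
    simp [Complex.mul_im]
    ring
  have hgre : ∀ t, (star (deriv γ t) * (γ t - p)).re = R t * (w t).re := by
    intro t
    rw [hkey t]
    simp [Complex.mul_re]
    ring
  have hgfun : g = fun t => -(R t * (ρ t * Real.sin (θ t))) := by
    funext t; rw [hgim t, him t]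
  -- ## derivative of R
  set R' : ℝ → ℝ := fun t =>
    ((γ t - p).re * (deriv γ t).re + (deriv γ t).re * (γ t - p).re)
      + ((γ t - p).im * (deriv γ t).im + (deriv γ t).im * (γ t - p).im) with hR'_def
  have hRD : ∀ t, HasDerivAt R (R' t) t := by
    intro t
    have hx : HasDerivAt (fun s => γ s - p) (deriv γ t) t := (hdγ t).hasDerivAt.sub_const p
    have hreD : HasDerivAt (fun s => (γ s - p).re) ((deriv γ t).re) t := by
      have := (Complex.reCLM.hasFDerivAt).comp_hasDerivAt t hx; simpa [Function.comp_def] using this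
    have himD : HasDerivAt (fun s => (γ s - p).im) ((deriv γ t).im) t := by
      have := (Complex.imCLM.hasFDerivAt).comp_hasDerivAt t hx; simpa [Function.comp_def] using this
    have h2 : R = fun s => (γ s - p).re * (γ s - p).re + (γ s - p).im * (γ s - p).im := by
      funext s; rw [hR_def]; exact Complex.normSq_apply _
    rw [h2]
    refine ((hreD.mul hreD).add (himD.mul himD)).congr_deriv ?_
    simp only [hR'_def]
    ring
  -- ## derivative of g
  have hgD : ∀ t, HasDerivAt g
      (-(R' t * (ρ t * Real.sin (θ t))
        + R t * ((ρ t * (q t).re) * Real.sin (θ t)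
          + ρ t * (Real.cos (θ t) * (q t).im)))) t := by
    intro t
    have h1 := ((hRD t).mul ((hρD t).mul ((hθD t).sin))).neg
    rw [hgfun]
    exact h1
  -- ## the normalized angle
  have hπpos : (0:ℝ) < Real.pi := Real.pi_pos
  set φ : ℝ → ℝ := fun t => θ t / Real.pi with hφ_def
  have hφD : ∀ t, HasDerivAt φ ((q t).im / Real.pi) t := fun t => (hθD t).div_const _
  have hφderiv : ∀ t, deriv φ t = (q t).im / Real.pi := fun t => (hφD t).deriv
  have hφcont : Continuous φ :=
    ((Differentiable.continuous (fun t => ((hθD t).differentiableAt))).div_const _ : _)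
  have hgzero : ∀ t, g t = 0 ↔ Real.sin (θ t) = 0 := by
    intro t
    rw [hgfun]
    simp only [neg_eq_zero, mul_eq_zero]
    constructor
    · rintro (h | h | h)
      · exact absurd h (hRpos t).ne'
      · exact absurd h (hρpos t).ne'
      · exact h
    · intro h; right; right; exact h
  have hphiint : ∀ t, (∃ m : ℤ, φ t = (m : ℝ)) ↔ Real.sin (θ t) = 0 := by
    intro t
    rw [Real.sin_eq_zero_iff]
    constructor
    · rintro ⟨m, hm⟩
      refine ⟨m, ?_⟩
      have : θ t / Real.pi = m := hm
      field_simp at this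
      linarith
    · rintro ⟨m, hm⟩
      refine ⟨m, ?_⟩
      show θ t / Real.pi = m
      rw [← hm]
      field_simp
  -- ## sign analysis at a crossing
  have hcross_sign : ∀ t, g t = 0 → deriv g t ≠ 0 →
      (-Real.sign ((star (deriv γ t) * (γ t - p)).re) * Real.sign (deriv g t)
        = Real.sign (deriv φ t) ∧ deriv φ t ≠ 0) := by
    intro t hgt hdgt
    have hsin : Real.sin (θ t) = 0 := (hgzero t).mp hgt
    have hcos : Real.cos (θ t) = 1 ∨ Real.cos (θ t) = -1 := by
      have h1 := Real.sin_sq_add_cos_sq (θ t)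
      rw [hsin] at h1
      have h2 : (Real.cos (θ t) - 1) * (Real.cos (θ t) + 1) = 0 := by nlinarith
      rcases mul_eq_zero.mp h2 with h | h
      · left; linarith
      · right; linarith
    have hdg : deriv g t = -(R t * ρ t * (Real.cos (θ t) * (q t).im)) := by
      rw [(hgD t).deriv, hsin]; ring
    have hqim : (q t).im ≠ 0 := by
      intro h0; apply hdgt; rw [hdg, h0]; ring
    have hφne : deriv φ t ≠ 0 := by
      rw [hφderiv t]; exact div_ne_zero hqim hπpos.ne'
    refine ⟨?_, hφne⟩
    have hRE : (star (deriv γ t) * (γ t - p)).re = R t * ρ t * Real.cos (θ t) := by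
      rw [hgre t, hre t]; ring
    have hsignφ : Real.sign (deriv φ t) = Real.sign ((q t).im) := by
      rw [hφderiv t, div_eq_inv_mul, sign_pos_mul (inv_pos.mpr hπpos)]
    have hRρ : 0 < R t * ρ t := mul_pos (hRpos t) (hρpos t)
    rw [hsignφ, hRE, hdg]
    rcases hcos with hc | hc
    · rw [hc, mul_one, Real.sign_of_pos hRρ]
      have h2 : -(R t * ρ t * (1 * (q t).im)) = -(R t * ρ t * (q t).im) := by ring
      rw [h2, Real.sign_neg, sign_pos_mul hRρ]
      ring
    · rw [hc]
      have h1 : R t * ρ t * (-1) = -(R t * ρ t) := by ring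
      rw [h1, Real.sign_neg, Real.sign_of_pos hRρ]
      have h2 : -(R t * ρ t * (-1 * (q t).im)) = R t * ρ t * (q t).im := by ring
      rw [h2, sign_pos_mul hRρ]
      ring
  -- ## periodicity of the angle
  have hθper' : ∀ t, θ (t + 1) = θ t + 2 * Real.pi * (n : ℝ) := by
    intro t
    show (F (t+1)).im + (w 0).arg = ((F t).im + (w 0).arg) + 2 * Real.pi * (n : ℝ)
    rw [hFper t, hn]
    simp [Complex.add_im, Complex.mul_im, Complex.mul_re]
    ring
  have hφper : ∀ t, φ (t + 1) = φ t + 2 * (n : ℝ) := by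
    intro t
    show θ (t + 1) / Real.pi = θ t / Real.pi + 2 * (n : ℝ)
    rw [hθper' t]
    field_simp
  have hφderper : ∀ t, deriv φ (t + 1) = deriv φ t := by
    intro t
    rw [hφderiv, hφderiv, hqper t]
  -- ## choice of base point
  have hinf : (Set.Ico (0:ℝ) 1).Infinite := Set.Ico_infinite (by norm_num)
  obtain ⟨a, ha⟩ := (hinf.diff hZ).nonempty
  have haI : a ∈ Set.Ico (0:ℝ) 1 := ha.1
  have hga : g a ≠ 0 := fun h => ha.2 ⟨ha.1, h⟩
  have haφ : ∀ m : ℤ, φ a ≠ (m : ℝ) := fun m hm =>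
    hga ((hgzero a).mpr ((hphiint a).mp ⟨m, hm⟩))
  have hbφ : ∀ m : ℤ, φ (a + 1) ≠ (m : ℝ) := by
    intro m hm
    apply haφ (m - 2 * n)
    have h1 := hφper a
    push_cast
    linarith
  have hZmem : ∀ t, t ∈ hZ.toFinset ↔ t ∈ Set.Ico (0:ℝ) 1 ∧ g t = 0 := by
    intro t
    rw [Set.Finite.mem_toFinset]
    exact Iff.rfl
  set σ : ℝ → ℝ := fun t => if t < a then t + 1 else t with hσ_def
  have hσval : ∀ t, σ t = if t < a then t + 1 else t := fun t => rfl
  have hσderiv : ∀ t ∈ hZ.toFinset, deriv φ (σ t) = deriv φ t := by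
    intro t _
    by_cases h1 : t < a
    · rw [hσval t, if_pos h1, hφderper t]
    · rw [hσval t, if_neg h1]
  have hσIoo : ∀ t ∈ hZ.toFinset, σ t ∈ Set.Ioo a (a + 1) := by
    intro t ht
    rw [hZmem] at ht
    have hta : t ≠ a := fun h => hga (h ▸ ht.2)
    by_cases h1 : t < a
    · rw [hσval t, if_pos h1]
      exact ⟨by linarith [ht.1.1, haI.2], by linarith⟩
    · rw [hσval t, if_neg h1]
      exact ⟨lt_of_le_of_ne (not_lt.mp h1) (Ne.symm hta), by linarith [ht.1.2, haI.1]⟩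
  have hσinj : ∀ x ∈ hZ.toFinset, ∀ y ∈ hZ.toFinset, σ x = σ y → x = y := by
    intro x hx y hy hxy
    rw [hZmem] at hx hy
    by_cases h1 : x < a <;> by_cases h2 : y < a
    · rw [hσval x, if_pos h1, hσval y, if_pos h2] at hxy; linarith
    · rw [hσval x, if_pos h1, hσval y, if_neg h2] at hxy
      linarith [hx.1.1, hy.1.2]
    · rw [hσval x, if_neg h1, hσval y, if_pos h2] at hxy
      linarith [hy.1.1, hx.1.2]
    · rw [hσval x, if_neg h1, hσval y, if_neg h2] at hxy; exact hxy
  set S : Finset ℝ := hZ.toFinset.image σ with hS_def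
  have hZint : ∀ t ∈ hZ.toFinset, ∃ m : ℤ, φ t = (m : ℝ) := by
    intro t ht
    rw [hZmem] at ht
    exact (hphiint t).mpr ((hgzero t).mp ht.2)
  have hSIoo : ∀ s ∈ S, s ∈ Set.Ioo a (a + 1) := by
    intro s hs
    obtain ⟨t, ht, rfl⟩ := Finset.mem_image.mp hs
    exact hσIoo t ht
  have hSint : ∀ s ∈ S, ∃ m : ℤ, φ s = (m : ℝ) := by
    intro s hs
    obtain ⟨t, ht, rfl⟩ := Finset.mem_image.mp hs
    obtain ⟨m, hm⟩ := hZint t ht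
    by_cases h1 : t < a
    · rw [hσval t, if_pos h1]
      refine ⟨m + 2 * n, ?_⟩
      rw [hφper t, hm]; push_cast; ring
    · rw [hσval t, if_neg h1]; exact ⟨m, hm⟩
  have hZφne : ∀ t ∈ hZ.toFinset, deriv φ t ≠ 0 := by
    intro t ht
    rw [hZmem] at ht
    exact (hcross_sign t ht.2 (hreg t ⟨ht.1, ht.2⟩)).2
  have hScross : ∀ s ∈ S, HasDerivAt φ (deriv φ s) s ∧ deriv φ s ≠ 0 := by
    intro s hs
    obtain ⟨t, ht, rfl⟩ := Finset.mem_image.mp hs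
    refine ⟨by rw [hφderiv]; exact hφD _, ?_⟩
    rw [hσderiv t ht]
    exact hZφne t ht
  have hSall : ∀ s ∈ Set.Ioo a (a + 1), (∃ m : ℤ, φ s = (m : ℝ)) → s ∈ S := by
    intro s hs hmint
    by_cases h1 : s < 1
    · have hsI : s ∈ Set.Ico (0:ℝ) 1 := ⟨le_trans haI.1 (le_of_lt hs.1), h1⟩
      have hgs : g s = 0 := (hgzero s).mpr ((hphiint s).mp hmint)
      have hsZ : s ∈ hZ.toFinset := (hZmem s).mpr ⟨hsI, hgs⟩
      refine Finset.mem_image.mpr ⟨s, hsZ, ?_⟩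
      rw [hσval s, if_neg (not_lt.mpr (le_of_lt hs.1))]
    · obtain ⟨m, hm⟩ := hmint
      have ht1 : s - 1 ∈ Set.Ico (0:ℝ) 1 := ⟨by linarith, by linarith [hs.2, haI.2]⟩
      have hφt : φ (s - 1) = ((m - 2 * n : ℤ) : ℝ) := by
        have h2 := hφper (s - 1)
        rw [sub_add_cancel] at h2
        push_cast
        linarith
      have hgs : g (s - 1) = 0 := (hgzero _).mpr ((hphiint _).mp ⟨m - 2 * n, hφt⟩)
      have hsZ : s - 1 ∈ hZ.toFinset := (hZmem _).mpr ⟨ht1, hgs⟩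
      refine Finset.mem_image.mpr ⟨s - 1, hsZ, ?_⟩
      rw [hσval, if_pos (by linarith [hs.2] : s - 1 < a)]
      ring
  have hcc := crossing_count φ hφcont S a (a + 1) (by linarith) hSIoo hSall hSint hScross haφ hbφ
  have hfloor : ((⌊φ (a + 1)⌋ : ℝ) - (⌊φ a⌋ : ℝ)) = 2 * (n : ℝ) := by
    have h1 : φ (a + 1) = φ a + ((2 * n : ℤ) : ℝ) := by rw [hφper a]; push_cast; ring
    rw [h1, Int.floor_add_intCast]
    push_cast
    ring
  have hsum1 : ∑ s ∈ S, Real.sign (deriv φ s)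
      = ∑ t ∈ hZ.toFinset, Real.sign (deriv φ (σ t)) :=
    Finset.sum_image hσinj
  have hsum2 : ∑ t ∈ hZ.toFinset, Real.sign (deriv φ (σ t))
      = ∑ t ∈ hZ.toFinset, Real.sign (deriv φ t) :=
    Finset.sum_congr rfl (fun t ht => by rw [hσderiv t ht])
  have hsum3 : (∑ t ∈ hZ.toFinset,
      -Real.sign ((star (deriv γ t) * (γ t - p)).re) * Real.sign (deriv g t))
      = ∑ t ∈ hZ.toFinset, Real.sign (deriv φ t) := by
    refine Finset.sum_congr rfl (fun t ht => ?_)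
    rw [hZmem] at ht
    exact (hcross_sign t ht.2 (hreg t ⟨ht.1, ht.2⟩)).1
  have hfinal : (∑ t ∈ hZ.toFinset,
      -Real.sign ((star (deriv γ t) * (γ t - p)).re) * Real.sign (deriv g t)) = 2 * (n : ℝ) := by
    rw [hsum3, ← hsum2, ← hsum1, hcc, hfloor]
  rw [hfinal]
  push_cast
  ring
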